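/- Let V be a real inner product space, M a positive integer, x : Fin M → V, and z : Fin M → ℝ with ∑_i z i = 1. Let x̄ = ∑_i z i • x i be the weighted centroid and write θ i j = ‖x i − x j‖. Then ∑_i z i * ‖x i − x̄‖⁶ = ∑_i ∑_j ∑_k ∑_l z i * z j * z k * z l * (θ i j)² * (θ i k)² * (θ i l)² − (3/2) * (∑_i ∑_j ∑_k z i * z j * z k * (θ i j)² * (θ i k)²) * (∑_i ∑_j z i * z j * (θ i j)²) + (5/8) * (∑_i ∑_j z i * z j * (θ i j)²)³. -/

import Mathlib

/-- The angularity `λ⁽⁶⁾` as an exact linear combination of energy flow polynomials: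
`∑ᵢ zᵢ ‖xᵢ - x̄‖⁶ = ∑ᵢⱼₖₗ zᵢzⱼzₖzₗ θᵢⱼ²θᵢₖ²θᵢₗ²
  - (3/2)(∑ᵢⱼₖ zᵢzⱼzₖ θᵢⱼ²θᵢₖ²)(∑ᵢⱼ zᵢzⱼ θᵢⱼ²) + (5/8)(∑ᵢⱼ zᵢzⱼ θᵢⱼ²)³`. -/
theorem angularity_six_efp
    {V : Type*} [NormedAddCommGroup V] [InnerProductSpace ℝ V]
    (M : ℕ) (hM : 0 < M) (x : Fin M → V) (z : Fin M → ℝ) (hz : ∑ i, z i = 1) :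
    let xbar : V := ∑ i, z i • x i
    let θ : Fin M → Fin M → ℝ := fun i j => ‖x i - x j‖
    ∑ i, z i * ‖x i - xbar‖ ^ 6 =
      (∑ i, ∑ j, ∑ k, ∑ l, z i * z j * z k * z l * θ i j ^ 2 * θ i k ^ 2 * θ i l ^ 2) -
        (3 / 2) * (∑ i, ∑ j, ∑ k, z i * z j * z k * θ i j ^ 2 * θ i k ^ 2) *
          (∑ i, ∑ j, z i * z j * θ i j ^ 2) +
        (5 / 8) * (∑ i, ∑ j, z i * z j * θ i j ^ 2) ^ 3 := by
  intro xbar θ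
  set y : Fin M → V := fun i => x i - xbar with hy
  set b : Fin M → ℝ := fun i => ‖y i‖ ^ 2 with hb
  set a : ℝ := ∑ i, z i * b i with ha
  -- centroid property
  have h0 : ∑ i, z i • y i = 0 := by
    simp only [hy, smul_sub, Finset.sum_sub_distrib, ← Finset.sum_smul, hz, one_smul]
    simp [xbar]
  -- squared distances via inner products
  have hθ : ∀ i j, θ i j ^ 2 = b i + b j - 2 * inner ℝ (y i) (y j) := by
    intro i j
    have hx : x i - x j = y i - y j := by simp [hy]
    simp only [θ, hx, hb]
    rw [@norm_sub_sq_real]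
    ring
  -- the key single-index sum
  have hkey : ∀ i, ∑ j, z j * θ i j ^ 2 = b i + a := by
    intro i
    have hinner : ∑ j, z j * inner ℝ (y i) (y j) = 0 := by
      have : (inner ℝ (y i) (∑ j, z j • y j) : ℝ) = ∑ j, z j * inner ℝ (y i) (y j) := by
        rw [inner_sum]
        exact Finset.sum_congr rfl fun j _ => real_inner_smul_right _ _ _
      rw [← this, h0, inner_zero_right]
    calc ∑ j, z j * θ i j ^ 2
        = ∑ j, (b i * z j + z j * b j - 2 * (z j * inner ℝ (y i) (y j))) := by
          refine Finset.sum_congr rfl fun j _ => ?_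
          rw [hθ]; ring
      _ = b i * (∑ j, z j) + (∑ j, z j * b j) - 2 * ∑ j, z j * inner ℝ (y i) (y j) := by
          rw [Finset.sum_sub_distrib, Finset.sum_add_distrib, ← Finset.mul_sum,
            ← Finset.mul_sum]
      _ = b i + a := by rw [hz, hinner, ha]; ring
  -- E2
  have hE2 : ∑ i, ∑ j, z i * z j * θ i j ^ 2 = 2 * a := by
    calc ∑ i, ∑ j, z i * z j * θ i j ^ 2
        = ∑ i, z i * (b i + a) := by
          refine Finset.sum_congr rfl fun i _ => ?_
          rw [← hkey i, Finset.mul_sum]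
          exact Finset.sum_congr rfl fun j _ => by ring
      _ = (∑ i, z i * b i) + a * ∑ i, z i := by
          rw [Finset.mul_sum, ← Finset.sum_add_distrib]
          exact Finset.sum_congr rfl fun i _ => by ring
      _ = 2 * a := by rw [hz, ← ha]; ring
  -- E3
  have hE3 : ∑ i, ∑ j, ∑ k, z i * z j * z k * θ i j ^ 2 * θ i k ^ 2
      = ∑ i, z i * (b i + a) ^ 2 := by
    refine Finset.sum_congr rfl fun i _ => ?_
    calc ∑ j, ∑ k, z i * z j * z k * θ i j ^ 2 * θ i k ^ 2
        = ∑ j, (z i * (z j * θ i j ^ 2)) * ∑ k, z k * θ i k ^ 2 := by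
          refine Finset.sum_congr rfl fun j _ => ?_
          rw [Finset.mul_sum]
          exact Finset.sum_congr rfl fun k _ => by ring
      _ = z i * (∑ j, z j * θ i j ^ 2) * (∑ k, z k * θ i k ^ 2) := by
          rw [← Finset.sum_mul, ← Finset.mul_sum]
      _ = z i * (b i + a) ^ 2 := by rw [hkey]; ring
  -- E4
  have hE4 : ∑ i, ∑ j, ∑ k, ∑ l,
      z i * z j * z k * z l * θ i j ^ 2 * θ i k ^ 2 * θ i l ^ 2
      = ∑ i, z i * (b i + a) ^ 3 := by
    refine Finset.sum_congr rfl fun i _ => ?_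
    calc ∑ j, ∑ k, ∑ l, z i * z j * z k * z l * θ i j ^ 2 * θ i k ^ 2 * θ i l ^ 2
        = ∑ j, ∑ k, (z i * (z j * θ i j ^ 2) * (z k * θ i k ^ 2)) *
            ∑ l, z l * θ i l ^ 2 := by
          refine Finset.sum_congr rfl fun j _ => Finset.sum_congr rfl fun k _ => ?_
          rw [Finset.mul_sum]
          exact Finset.sum_congr rfl fun l _ => by ring
      _ = (∑ j, ∑ k, z i * (z j * θ i j ^ 2) * (z k * θ i k ^ 2)) *
            ∑ l, z l * θ i l ^ 2 := by
          simp only [← Finset.sum_mul]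
      _ = z i * (∑ j, z j * θ i j ^ 2) * (∑ k, z k * θ i k ^ 2) *
            (∑ l, z l * θ i l ^ 2) := by
          congr 1
          calc ∑ j, ∑ k, z i * (z j * θ i j ^ 2) * (z k * θ i k ^ 2)
              = ∑ j, (z i * (z j * θ i j ^ 2)) * ∑ k, z k * θ i k ^ 2 := by
                refine Finset.sum_congr rfl fun j _ => ?_
                rw [Finset.mul_sum]
            _ = z i * (∑ j, z j * θ i j ^ 2) * (∑ k, z k * θ i k ^ 2) := by
                rw [← Finset.sum_mul, ← Finset.mul_sum]
      _ = z i * (b i + a) ^ 3 := by rw [hkey]; ring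
  -- LHS
  have hL : ∑ i, z i * ‖x i - xbar‖ ^ 6 = ∑ i, z i * b i ^ 3 := by
    refine Finset.sum_congr rfl fun i _ => ?_
    have : ‖x i - xbar‖ ^ 6 = (‖y i‖ ^ 2) ^ 3 := by rw [hy]; ring
    rw [this, hb]
  -- expansions of the moment sums
  have exp3 : ∑ i, z i * (b i + a) ^ 3
      = (∑ i, z i * b i ^ 3) + 3 * a * (∑ i, z i * b i ^ 2) + 3 * a ^ 2 * a + a ^ 3 := by
    calc ∑ i, z i * (b i + a) ^ 3
        = ∑ i, (z i * b i ^ 3 + 3 * a * (z i * b i ^ 2) + 3 * a ^ 2 * (z i * b i)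
            + a ^ 3 * z i) := Finset.sum_congr rfl fun i _ => by ring
      _ = (∑ i, z i * b i ^ 3) + 3 * a * (∑ i, z i * b i ^ 2)
            + 3 * a ^ 2 * (∑ i, z i * b i) + a ^ 3 * (∑ i, z i) := by
          rw [Finset.sum_add_distrib, Finset.sum_add_distrib, Finset.sum_add_distrib,
            ← Finset.mul_sum, ← Finset.mul_sum, ← Finset.mul_sum]
      _ = _ := by rw [hz, ← ha]; ring
  have exp2 : ∑ i, z i * (b i + a) ^ 2
      = (∑ i, z i * b i ^ 2) + 2 * a * a + a ^ 2 := by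
    calc ∑ i, z i * (b i + a) ^ 2
        = ∑ i, (z i * b i ^ 2 + 2 * a * (z i * b i) + a ^ 2 * z i) :=
          Finset.sum_congr rfl fun i _ => by ring
      _ = (∑ i, z i * b i ^ 2) + 2 * a * (∑ i, z i * b i) + a ^ 2 * (∑ i, z i) := by
          rw [Finset.sum_add_distrib, Finset.sum_add_distrib,
            ← Finset.mul_sum, ← Finset.mul_sum]
      _ = _ := by rw [hz, ← ha]; ring
  rw [hL, hE2, hE3, hE4, exp3, exp2]
  ring
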